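/- Isotropic interactions: let v_d : ℝ^d → ℝ^d be Lipschitz and bounded, R > 0, N ∈ ℕ, F : ℝ^d → ℝ^d Lipschitz on B_R(0), and χ : ℝ^d → [0,1] Lipschitz with χ(z) = 0 for z ∉ B_R(0). Define v[μ](x) = v_d(x) + N ∫_{ℝ^d} F(y−x) χ(y−x) dμ(y) for μ ∈ P₁(ℝ^d). Then v satisfies Assumption A: (i) |v[μ](x)| ≤ sup|v_d| + N sup_{|z|≤R}|F(z)| for all x, μ; (ii) there is a constant L > 0 with |v[ν](y) − v[μ](x)| ≤ L(|y−x| + W₁(μ,ν)) for all x,y and μ,ν ∈ P₁; (iii) v[αμ+(1−α)ν] = αv[μ]+(1−α)v[ν] for all μ,ν ∈ P₁ and α ∈ [0,1]. -/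

import Mathlib

open MeasureTheory Metric Filter

noncomputable section

abbrev Euc (d : ℕ) := EuclideanSpace ℝ (Fin d)

/-- `P1 μ`: μ is a Borel probability measure with finite first moment. -/
def P1 {d : ℕ} (μ : Measure (Euc d)) : Prop :=
  IsProbabilityMeasure μ ∧ Integrable (fun x => ‖x‖) μ

/-- The Wasserstein distance `W₁(μ,ν) = sup {∫ φ dν − ∫ φ dμ : φ 1-Lipschitz}`. -/
def W1 {d : ℕ} (μ ν : Measure (Euc d)) : ℝ :=
  ⨆ φ : {φ : Euc d → ℝ // LipschitzWith 1 φ}, (∫ x, φ.1 x ∂ν - ∫ x, φ.1 x ∂μ)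

open scoped RealInnerProductSpace

lemma lip_integrable {d : ℕ} (μ : Measure (Euc d)) (hp : IsProbabilityMeasure μ)
    (hm : Integrable (fun x => ‖x‖) μ) (φ : Euc d → ℝ) (hφ : LipschitzWith 1 φ) :
    Integrable φ μ := by
  have : IsProbabilityMeasure μ := hp
  refine (((integrable_const (|φ 0|)).add hm).mono'
    hφ.continuous.aestronglyMeasurable ?_)
  filter_upwards with x
  have h1 : dist (φ x) (φ 0) ≤ 1 * dist x 0 := hφ.dist_le_mul x 0
  simp only [Real.dist_eq, dist_zero_right, one_mul] at h1
  calc ‖φ x‖ = |φ 0 + (φ x - φ 0)| := by rw [Real.norm_eq_abs]; ring_nf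
    _ ≤ |φ 0| + |φ x - φ 0| := abs_add_le _ _
    _ ≤ |φ 0| + ‖x‖ := by linarith

lemma W1_bddAbove {d : ℕ} (μ ν : Measure (Euc d)) (hμ : P1 μ) (hν : P1 ν) :
    BddAbove (Set.range fun φ : {φ : Euc d → ℝ // LipschitzWith 1 φ} =>
      (∫ x, φ.1 x ∂ν - ∫ x, φ.1 x ∂μ)) := by
  obtain ⟨hpμ, hmμ⟩ := hμ
  obtain ⟨hpν, hmν⟩ := hν
  refine ⟨(∫ x, ‖x‖ ∂ν) + (∫ x, ‖x‖ ∂μ), ?_⟩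
  rintro r ⟨⟨φ, hφ⟩, rfl⟩
  have hiμ : Integrable φ μ := lip_integrable μ hpμ hmμ φ hφ
  have hiν : Integrable φ ν := lip_integrable ν hpν hmν φ hφ
  have key : ∀ x : Euc d, |φ x - φ 0| ≤ ‖x‖ := by
    intro x
    have h1 : dist (φ x) (φ 0) ≤ 1 * dist x 0 := hφ.dist_le_mul x 0
    simpa [Real.dist_eq, dist_zero_right] using h1
  have eμ : ∫ x, φ x ∂μ = (∫ x, (φ x - φ 0) ∂μ) + φ 0 := by
    rw [integral_sub hiμ (integrable_const _), integral_const]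
    simp
  have eν : ∫ x, φ x ∂ν = (∫ x, (φ x - φ 0) ∂ν) + φ 0 := by
    rw [integral_sub hiν (integrable_const _), integral_const]
    simp
  have bμ : |∫ x, (φ x - φ 0) ∂μ| ≤ ∫ x, ‖x‖ ∂μ := by
    rw [← Real.norm_eq_abs]
    refine (norm_integral_le_integral_norm _).trans ?_
    exact integral_mono (hiμ.sub (integrable_const _)).norm hmμ (fun x => by
      simpa [Real.norm_eq_abs] using key x)
  have bν : |∫ x, (φ x - φ 0) ∂ν| ≤ ∫ x, ‖x‖ ∂ν := by
    rw [← Real.norm_eq_abs]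
    refine (norm_integral_le_integral_norm _).trans ?_
    exact integral_mono (hiν.sub (integrable_const _)).norm hmν (fun x => by
      simpa [Real.norm_eq_abs] using key x)
  simp only []
  rw [eμ, eν]
  have := abs_le.mp bμ
  have := abs_le.mp bν
  linarith

lemma W1_nonneg {d : ℕ} (μ ν : Measure (Euc d)) (hμ : P1 μ) (hν : P1 ν) :
    0 ≤ W1 μ ν := by
  have h := le_ciSup (W1_bddAbove μ ν hμ hν)
    ⟨(fun _ => (0:ℝ)), (LipschitzWith.const 0).weaken (by norm_num)⟩
  simpa [W1] using h

lemma key_W1 {d : ℕ} (μ ν : Measure (Euc d)) (hμ : P1 μ) (hν : P1 ν)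
    (h : Euc d → Euc d) (K : ℝ) (hK : 0 < K)
    (hh : ∀ z w, ‖h z - h w‖ ≤ K * ‖z - w‖)
    (hiμ : Integrable h μ) (hiν : Integrable h ν) :
    ‖(∫ z, h z ∂ν) - ∫ z, h z ∂μ‖ ≤ K * W1 μ ν := by
  set a := (∫ z, h z ∂ν) - ∫ z, h z ∂μ with ha
  by_cases haz : a = 0
  · rw [haz, norm_zero]
    exact mul_nonneg hK.le (W1_nonneg μ ν hμ hν)
  · set e : Euc d := ‖a‖⁻¹ • a with he
    have hea : ‖e‖ = 1 := by
      rw [he, norm_smul, norm_inv, norm_norm]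
      field_simp [norm_ne_zero_iff.mpr haz]
    set ψ : Euc d → ℝ := (fun z => K⁻¹ * (inner ℝ e (h z) : ℝ)) with hψ
    have hψlip : LipschitzWith 1 ψ := by
      refine LipschitzWith.of_dist_le_mul (fun z w => ?_)
      rw [NNReal.coe_one, one_mul, Real.dist_eq, dist_eq_norm]
      have : ψ z - ψ w = K⁻¹ * (inner ℝ e (h z - h w) : ℝ) := by
        rw [hψ, inner_sub_right]; ring
      rw [this, abs_mul, abs_of_pos (inv_pos.mpr hK)]
      have hcs : |(inner ℝ e (h z - h w) : ℝ)| ≤ ‖h z - h w‖ := by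
        have := abs_real_inner_le_norm e (h z - h w)
        simpa [hea] using this
      calc K⁻¹ * |(inner ℝ e (h z - h w) : ℝ)| ≤ K⁻¹ * (K * ‖z - w‖) := by
            exact mul_le_mul_of_nonneg_left (hcs.trans (hh z w)) (inv_pos.mpr hK).le
        _ = ‖z - w‖ := by field_simp
    have hint : ∀ (ρ : Measure (Euc d)), Integrable h ρ →
        ∫ z, ψ z ∂ρ = K⁻¹ * (inner ℝ e (∫ z, h z ∂ρ) : ℝ) := by
      intro ρ hiρ
      rw [hψ]
      rw [integral_const_mul, integral_inner hiρ]
    have hval : (∫ z, ψ z ∂ν) - ∫ z, ψ z ∂μ = K⁻¹ * ‖a‖ := by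
      rw [hint ν hiν, hint μ hiμ, ← mul_sub, ← inner_sub_right, ← ha, he,
        real_inner_smul_left, real_inner_self_eq_norm_sq]
      have : ‖a‖ ≠ 0 := norm_ne_zero_iff.mpr haz
      field_simp
    have hle : (∫ z, ψ z ∂ν) - ∫ z, ψ z ∂μ ≤ W1 μ ν :=
      le_ciSup (W1_bddAbove μ ν hμ hν) ⟨ψ, hψlip⟩
    rw [hval] at hle
    calc ‖a‖ = K * (K⁻¹ * ‖a‖) := by field_simp
      _ ≤ K * W1 μ ν := mul_le_mul_of_nonneg_left hle hK.le

/-- Proposition 2 of the paper: isotropic interactions.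
Let `v_d : ℝ^d → ℝ^d` be Lipschitz and bounded, `R > 0`, `N ∈ ℕ`, `F` Lipschitz on the
ball of radius `R` about the origin, and `χ : ℝ^d → [0,1]` Lipschitz with `χ(z) = 0` for
`z ∉ B_R(0)`. Then `v[μ](x) = v_d(x) + N ∫ F(y−x) χ(y−x) dμ(y)` satisfies Assumption A:
(i) `|v[μ](x)| ≤ sup|v_d| + N sup_{|z|≤R}|F|`; (ii) combined Lipschitz continuity in `x`
and `μ` (w.r.t. `W₁`); (iii) linearity w.r.t. the measure for convex combinations. -/
theorem isotropic_velocity_satisfies_assumptionA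
    (d : ℕ) (hd : 1 ≤ d)
    (vd : Euc d → Euc d) (Kd : NNReal) (hvdlip : LipschitzWith Kd vd)
    (Vd : ℝ) (hVd : Vd = ⨆ x : Euc d, ‖vd x‖) (hvdbdd : ∀ x, ‖vd x‖ ≤ Vd)
    (R : ℝ) (hR : 0 < R) (N : ℕ)
    (F : Euc d → Euc d) (LF : NNReal)
    (hF : LipschitzOnWith LF F (Metric.closedBall 0 R))
    (χ : Euc d → ℝ) (Lχ : NNReal) (hχlip : LipschitzWith Lχ χ)
    (hχrange : ∀ z, χ z ∈ Set.Icc (0:ℝ) 1)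
    (hχ0 : ∀ z ∉ Metric.ball (0:Euc d) R, χ z = 0)
    (Fmax : ℝ) (hFmax : Fmax = ⨆ z : Metric.closedBall (0:Euc d) R, ‖F z.1‖)
    (v : Measure (Euc d) → Euc d → Euc d)
    (hv : ∀ μ x, v μ x = vd x + (N : ℝ) • ∫ y, χ (y - x) • F (y - x) ∂μ) :
    (∀ μ, P1 μ → ∀ x, ‖v μ x‖ ≤ Vd + N * Fmax) ∧
    (∃ L : ℝ, 0 < L ∧ ∀ μ ν, P1 μ → P1 ν → ∀ x y,
      ‖v ν y - v μ x‖ ≤ L * (‖y - x‖ + W1 μ ν)) ∧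
    (∀ μ ν, P1 μ → P1 ν → ∀ α : ℝ, 0 ≤ α → α ≤ 1 → ∀ x,
      v (ENNReal.ofReal α • μ + ENNReal.ofReal (1 - α) • ν) x
        = α • v μ x + (1 - α) • v ν x) := by
  -- the interaction kernel
  set g : Euc d → Euc d := fun z => χ z • F z with hg
  -- basic bound facts on F
  obtain ⟨C, hC⟩ := (isCompact_closedBall (0:Euc d) R).exists_bound_of_continuousOn
    hF.continuousOn
  have hbdd : BddAbove (Set.range fun z : Metric.closedBall (0:Euc d) R => ‖F z.1‖) := by
    refine ⟨C, ?_⟩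
    rintro r ⟨⟨z, hz⟩, rfl⟩
    exact hC z hz
  have hFle : ∀ z ∈ Metric.closedBall (0:Euc d) R, ‖F z‖ ≤ Fmax := by
    intro z hz
    rw [hFmax]
    exact le_ciSup hbdd ⟨z, hz⟩
  have hFm0 : 0 ≤ Fmax :=
    (norm_nonneg _).trans (hFle 0 (mem_closedBall_self hR.le))
  -- pointwise bound on g
  have hgbd : ∀ z, ‖g z‖ ≤ Fmax := by
    intro z
    by_cases hz : z ∈ Metric.ball (0:Euc d) R
    · rw [hg]
      simp only [norm_smul, Real.norm_eq_abs, abs_of_nonneg (hχrange z).1]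
      calc χ z * ‖F z‖ ≤ 1 * Fmax := by
            exact mul_le_mul (hχrange z).2 (hFle z (ball_subset_closedBall hz))
              (norm_nonneg _) zero_le_one
        _ = Fmax := one_mul _
    · simp only [hg, hχ0 z hz, zero_smul, norm_zero]
      exact hFm0
  -- Lipschitz constant for g
  set Kg : ℝ := (Lχ : ℝ) * Fmax + (LF : ℝ) + 1 with hKg
  have hKg0 : 0 < Kg := by positivity
  have hhalf : ∀ z w, z ∈ Metric.ball (0:Euc d) R → w ∉ Metric.ball (0:Euc d) R →
      ‖g z - g w‖ ≤ Kg * ‖z - w‖ := by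
    intro z w hz hw
    have hχw : χ w = 0 := hχ0 w hw
    have hχz : χ z ≤ (Lχ : ℝ) * ‖z - w‖ := by
      have := hχlip.dist_le_mul z w
      rw [Real.dist_eq, dist_eq_norm] at this
      calc χ z = χ z - χ w := by rw [hχw]; ring
        _ ≤ |χ z - χ w| := le_abs_self _
        _ ≤ (Lχ : ℝ) * ‖z - w‖ := this
    have : ‖g z - g w‖ = χ z * ‖F z‖ := by
      rw [hg]
      simp [hχw, norm_smul, abs_of_nonneg (hχrange z).1]
    rw [this]
    calc χ z * ‖F z‖ ≤ ((Lχ : ℝ) * ‖z - w‖) * Fmax :=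
          mul_le_mul hχz (hFle z (ball_subset_closedBall hz)) (norm_nonneg _)
            (by positivity)
      _ = ((Lχ : ℝ) * Fmax) * ‖z - w‖ := by ring
      _ ≤ Kg * ‖z - w‖ := by
          have : (Lχ : ℝ) * Fmax ≤ Kg := by
            rw [hKg]; linarith [LF.coe_nonneg]
          exact mul_le_mul_of_nonneg_right this (norm_nonneg _)
  have hglip : ∀ z w, ‖g z - g w‖ ≤ Kg * ‖z - w‖ := by
    intro z w
    by_cases hz : z ∈ Metric.ball (0:Euc d) R <;>
      by_cases hw : w ∈ Metric.ball (0:Euc d) R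
    · -- both in the ball
      have hz' := ball_subset_closedBall hz
      have hw' := ball_subset_closedBall hw
      have hFd : ‖F z - F w‖ ≤ (LF : ℝ) * ‖z - w‖ := by
        have := hF.dist_le_mul z hz' w hw'
        rwa [dist_eq_norm, dist_eq_norm] at this
      have hχd : |χ z - χ w| ≤ (Lχ : ℝ) * ‖z - w‖ := by
        have := hχlip.dist_le_mul z w
        rwa [Real.dist_eq, dist_eq_norm] at this
      calc ‖g z - g w‖ = ‖χ z • (F z - F w) + (χ z - χ w) • F w‖ := by
            rw [hg]; congr 1; simp [smul_sub, sub_smul]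
        _ ≤ ‖χ z • (F z - F w)‖ + ‖(χ z - χ w) • F w‖ := norm_add_le _ _
        _ = |χ z| * ‖F z - F w‖ + |χ z - χ w| * ‖F w‖ := by
            rw [norm_smul, norm_smul, Real.norm_eq_abs, Real.norm_eq_abs]
        _ ≤ 1 * ((LF : ℝ) * ‖z - w‖) + ((Lχ : ℝ) * ‖z - w‖) * Fmax := by
            refine add_le_add ?_ ?_
            · refine mul_le_mul ?_ hFd (norm_nonneg _) zero_le_one
              rw [abs_of_nonneg (hχrange z).1]; exact (hχrange z).2
            · exact mul_le_mul hχd (hFle w hw') (norm_nonneg _) (by positivity)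
        _ = ((Lχ : ℝ) * Fmax + (LF : ℝ)) * ‖z - w‖ := by ring
        _ ≤ Kg * ‖z - w‖ := by
            have : (Lχ : ℝ) * Fmax + (LF : ℝ) ≤ Kg := by rw [hKg]; linarith
            exact mul_le_mul_of_nonneg_right this (norm_nonneg _)
    · exact hhalf z w hz hw
    · rw [norm_sub_rev, norm_sub_rev z w]
      exact hhalf w z hw hz
    · simp only [hg, hχ0 z hz, hχ0 w hw, zero_smul, sub_zero, norm_zero]
      positivity
  have hgcont : Continuous g := by
    have : LipschitzWith (Real.toNNReal Kg) g := by
      refine LipschitzWith.of_dist_le_mul (fun z w => ?_)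
      rw [dist_eq_norm, dist_eq_norm, Real.coe_toNNReal _ hKg0.le]
      exact hglip z w
    exact this.continuous
  -- integrability of the shifted kernel
  have hgint : ∀ (ρ : Measure (Euc d)), IsProbabilityMeasure ρ → ∀ x : Euc d,
      Integrable (fun y => χ (y - x) • F (y - x)) ρ := by
    intro ρ hρ x
    have : IsProbabilityMeasure ρ := hρ
    refine (integrable_const Fmax).mono' ?_ ?_
    · exact (hgcont.comp (continuous_id.sub continuous_const)).aestronglyMeasurable
    · filter_upwards with y
      simpa [Real.norm_eq_abs, abs_of_nonneg hFm0] using hgbd (y - x)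
  -- norm bound on the integral term
  have hIbd : ∀ (ρ : Measure (Euc d)), IsProbabilityMeasure ρ → ∀ x : Euc d,
      ‖∫ y, χ (y - x) • F (y - x) ∂ρ‖ ≤ Fmax := by
    intro ρ hρ x
    have : IsProbabilityMeasure ρ := hρ
    calc ‖∫ y, χ (y - x) • F (y - x) ∂ρ‖ ≤ ∫ y, ‖χ (y - x) • F (y - x)‖ ∂ρ :=
          norm_integral_le_integral_norm _
      _ ≤ ∫ _y, Fmax ∂ρ := by
          refine integral_mono (hgint ρ hρ x).norm (integrable_const _) ?_
          intro y
          exact hgbd (y - x)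
      _ = Fmax := by simp
  refine ⟨?_, ?_, ?_⟩
  · -- (i) uniform bound
    intro μ hμ x
    rw [hv]
    calc ‖vd x + (N : ℝ) • ∫ y, χ (y - x) • F (y - x) ∂μ‖
        ≤ ‖vd x‖ + ‖(N : ℝ) • ∫ y, χ (y - x) • F (y - x) ∂μ‖ := norm_add_le _ _
      _ ≤ Vd + (N : ℝ) * Fmax := by
          refine add_le_add (hvdbdd x) ?_
          rw [norm_smul, Real.norm_natCast]
          exact mul_le_mul_of_nonneg_left (hIbd μ hμ.1 x) (Nat.cast_nonneg N)
  · -- (ii) Lipschitz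
    refine ⟨(Kd : ℝ) + N * Kg + 1, by positivity, ?_⟩
    intro μ ν hμ hν x y
    have hμp := hμ.1
    have hνp := hν.1
    set Iνy := ∫ z, χ (z - y) • F (z - y) ∂ν with hIνy
    set Iνx := ∫ z, χ (z - x) • F (z - x) ∂ν with hIνx
    set Iμx := ∫ z, χ (z - x) • F (z - x) ∂μ with hIμx
    have hA : ‖Iνy - Iνx‖ ≤ Kg * ‖y - x‖ := by
      have : IsProbabilityMeasure ν := hνp
      rw [hIνy, hIνx, ← integral_sub (hgint ν hνp y) (hgint ν hνp x)]
      calc ‖∫ z, (χ (z - y) • F (z - y) - χ (z - x) • F (z - x)) ∂ν‖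
          ≤ ∫ z, ‖χ (z - y) • F (z - y) - χ (z - x) • F (z - x)‖ ∂ν :=
            norm_integral_le_integral_norm _
        _ ≤ ∫ _z, Kg * ‖y - x‖ ∂ν := by
            refine integral_mono ((hgint ν hνp y).sub (hgint ν hνp x)).norm
              (integrable_const _) ?_
            intro z
            have := hglip (z - y) (z - x)
            simpa [sub_sub_sub_cancel_left, norm_sub_rev x y] using this
        _ = Kg * ‖y - x‖ := by simp
    have hB : ‖Iνx - Iμx‖ ≤ Kg * W1 μ ν := by
      refine key_W1 μ ν hμ hν (fun z => χ (z - x) • F (z - x)) Kg hKg0 ?_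
        (hgint μ hμp x) (hgint ν hνp x)
      intro z w
      have := hglip (z - x) (w - x)
      simpa [sub_sub_sub_cancel_right] using this
    have hvd : ‖vd y - vd x‖ ≤ (Kd : ℝ) * ‖y - x‖ := by
      have := hvdlip.dist_le_mul y x
      rwa [dist_eq_norm, dist_eq_norm] at this
    have hsplit : v ν y - v μ x = (vd y - vd x) + (N : ℝ) • ((Iνy - Iνx) + (Iνx - Iμx)) := by
      rw [hv, hv, ← hIνy, ← hIμx]
      module
    have hW1 : 0 ≤ W1 μ ν := W1_nonneg μ ν hμ hν
    have hnn : 0 ≤ ‖y - x‖ := norm_nonneg _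
    calc ‖v ν y - v μ x‖
        ≤ ‖vd y - vd x‖ + (N : ℝ) * (‖Iνy - Iνx‖ + ‖Iνx - Iμx‖) := by
          rw [hsplit]
          refine (norm_add_le _ _).trans ?_
          refine add_le_add (le_refl _) ?_
          rw [norm_smul, Real.norm_natCast]
          exact mul_le_mul_of_nonneg_left (norm_add_le _ _) (Nat.cast_nonneg N)
      _ ≤ (Kd : ℝ) * ‖y - x‖ + (N : ℝ) * (Kg * ‖y - x‖ + Kg * W1 μ ν) := by
          gcongr
      _ ≤ ((Kd : ℝ) + N * Kg + 1) * (‖y - x‖ + W1 μ ν) := by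
          have hKdn : (0:ℝ) ≤ Kd := Kd.coe_nonneg
          have hNn : (0:ℝ) ≤ N := Nat.cast_nonneg N
          nlinarith [mul_nonneg hKdn hW1, mul_nonneg (mul_nonneg hNn hKg0.le) hW1]
  · -- (iii) linearity
    intro μ ν hμ hν α hα0 hα1 x
    have hμp := hμ.1
    have hνp := hν.1
    have hintμ : Integrable (fun y => χ (y - x) • F (y - x)) (ENNReal.ofReal α • μ) :=
      (hgint μ hμp x).smul_measure ENNReal.ofReal_ne_top
    have hintν : Integrable (fun y => χ (y - x) • F (y - x)) (ENNReal.ofReal (1 - α) • ν) :=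
      (hgint ν hνp x).smul_measure ENNReal.ofReal_ne_top
    rw [hv, hv, hv, integral_add_measure hintμ hintν, integral_smul_measure,
      integral_smul_measure, ENNReal.toReal_ofReal hα0, ENNReal.toReal_ofReal (by linarith)]
    module


end
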